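/- arXiv:1605.07500 — 3 statements merged into one kernel-verified Lean document; each statement's English description precedes it below -/
import Mathlib

section
/- Simultaneous improvement of a family of subsolutions: with Ȳ the subsolution built from the family (Ȳ^{l})_{l∈I} via the maximizing selector l*(j) over nondecreasing sets K(j), and r̄ ∈ A_0 satisfying r̄_j^⊤ E_j[β_{j+1} Ȳ_{j+1}] − F_j^{#}(r̄_j) = F_j(E_j[β_{j+1} Ȳ_{j+1}]) P-a.s., for any M ∈ M_D it holds P-a.s. for all j = 0,...,J-1 that E_j[θ_j^{low}(r̄,M)] ≥ F_j(E_j[β_{j+1} Ȳ_{j+1}]) = max_{l ∈ K(j+1)} F_j(E_j[β_{j+1} Ȳ_{j+1}^{l}]) ≥ max_{l ∈ K(j+1)} Ȳ_j^{l}. -/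
open MeasureTheory
open scoped ENNReal

noncomputable section

variable {Ω : Type*} {m0 : MeasurableSpace Ω}

/-- `L^{∞-}`: membership in `L^p` for every finite `p ≥ 1`. -/
def MemLinfMinus {E : Type*} [NormedAddCommGroup E] (μ : Measure Ω) (f : Ω → E) : Prop :=
  ∀ p : ℝ≥0∞, 1 ≤ p → p ≠ ⊤ → MemLp f p μ

/-- Euclidean dot product on `Fin D → ℝ`. -/
def dotp {D : ℕ} (x y : Fin D → ℝ) : ℝ := ∑ d, x d * y d

/-- Componentwise conditional expectation of an `ℝ^D`-valued random vector. -/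
def cexpV (μ : Measure Ω) (m : MeasurableSpace Ω) {D : ℕ} (f : Ω → Fin D → ℝ) :
    Ω → Fin D → ℝ :=
  fun ω d => (μ[fun ω' => f ω' d|m]) ω

/-- The `ℝ^D`-valued process `β_j Y_j` (vector weight times scalar process). -/
def bprod {D : ℕ} (β : ℕ → Ω → Fin D → ℝ) (Y : ℕ → Ω → ℝ) (j : ℕ) : Ω → Fin D → ℝ :=
  fun ω d => β j ω d * Y j ω

/-- Convex (Fenchel) conjugate, with values in `EReal`. -/
def econj {D : ℕ} (f : (Fin D → ℝ) → ℝ) (u : Fin D → ℝ) : EReal :=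
  ⨆ z : Fin D → ℝ, ((dotp u z - f z : ℝ) : EReal)

/-- Real-valued version of the convex conjugate (meaningful where the conjugate is finite). -/
def rconj {D : ℕ} (f : (Fin D → ℝ) → ℝ) (u : Fin D → ℝ) : ℝ := (econj f u).toReal

/-- The Doob martingale of an `ℝ^D`-valued process `Z`:
`j ↦ ∑_{i=0}^{j-1} (Z_{i+1} - E_i[Z_{i+1}])`. -/
def doobMart (μ : Measure Ω) (ℱ : Filtration ℕ m0) {D : ℕ} (Z : ℕ → Ω → Fin D → ℝ) :
    ℕ → Ω → Fin D → ℝ :=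
  fun j ω d => ∑ i ∈ Finset.range j, (Z (i + 1) ω d - cexpV μ (ℱ i) (Z (i + 1)) ω d)

/-- Standing assumptions on the data `(F, β, ξ)` of the convex dynamic program:
measurability, adaptedness and convexity of the generator, polynomial growth with an
`L^{∞-}` coefficient, and integrability/adaptedness of the weights and terminal condition. -/
structure Setting (μ : Measure Ω) (ℱ : Filtration ℕ m0) (J D : ℕ)
    (F : ℕ → Ω → (Fin D → ℝ) → ℝ) (β : ℕ → Ω → Fin D → ℝ) (ξ : Ω → ℝ) : Prop where
  F_meas : ∀ j < J, Measurable fun p : Ω × (Fin D → ℝ) => F j p.1 p.2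
  F_adapted : ∀ j < J, ∀ z : Fin D → ℝ, StronglyMeasurable[ℱ j] fun ω => F j ω z
  F_convex : ∀ j < J, ∀ ω, ConvexOn ℝ Set.univ (F j ω)
  F_growth : ∃ q : ℝ, 0 ≤ q ∧ ∃ α : ℕ → Ω → ℝ,
      (∀ j < J, StronglyMeasurable[ℱ j] (α j)) ∧
      (∀ j < J, ∀ᵐ ω ∂μ, 0 ≤ α j ω) ∧ (∀ j < J, MemLinfMinus μ (α j)) ∧
      ∀ j < J, ∀ z : Fin D → ℝ, ∀ᵐ ω ∂μ, |F j ω z| ≤ α j ω * (1 + ‖z‖ ^ q)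
  β_adapted : ∀ j ≤ J, StronglyMeasurable[ℱ j] (β j)
  β_int : ∀ j ≤ J, MemLinfMinus μ (β j)
  ξ_meas : StronglyMeasurable[ℱ J] ξ
  ξ_int : MemLinfMinus μ ξ

/-- `Y` is an adapted `L^{∞-}` solution of the dynamic programming equation
`Y_j = F_j(E_j[β_{j+1} Y_{j+1}])`, `Y_J = ξ`. -/
def IsSolution (μ : Measure Ω) (ℱ : Filtration ℕ m0) (J D : ℕ)
    (F : ℕ → Ω → (Fin D → ℝ) → ℝ) (β : ℕ → Ω → Fin D → ℝ) (ξ : Ω → ℝ)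
    (Y : ℕ → Ω → ℝ) : Prop :=
  (∀ j ≤ J, StronglyMeasurable[ℱ j] (Y j) ∧ MemLinfMinus μ (Y j)) ∧
  (∀ᵐ ω ∂μ, Y J ω = ξ ω) ∧
  (∀ j < J, ∀ᵐ ω ∂μ, Y j ω = F j ω (cexpV μ (ℱ j) (bprod β Y (j + 1)) ω))

/-- Supersolution of the dynamic program. -/
def IsSupersolution (μ : Measure Ω) (ℱ : Filtration ℕ m0) (J D : ℕ)
    (F : ℕ → Ω → (Fin D → ℝ) → ℝ) (β : ℕ → Ω → Fin D → ℝ) (ξ : Ω → ℝ)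
    (Y : ℕ → Ω → ℝ) : Prop :=
  (∀ j ≤ J, StronglyMeasurable[ℱ j] (Y j) ∧ MemLinfMinus μ (Y j)) ∧
  (∀ᵐ ω ∂μ, ξ ω ≤ Y J ω) ∧
  (∀ j < J, ∀ᵐ ω ∂μ, F j ω (cexpV μ (ℱ j) (bprod β Y (j + 1)) ω) ≤ Y j ω)

/-- Subsolution of the dynamic program. -/
def IsSubsolution (μ : Measure Ω) (ℱ : Filtration ℕ m0) (J D : ℕ)
    (F : ℕ → Ω → (Fin D → ℝ) → ℝ) (β : ℕ → Ω → Fin D → ℝ) (ξ : Ω → ℝ)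
    (Y : ℕ → Ω → ℝ) : Prop :=
  (∀ j ≤ J, StronglyMeasurable[ℱ j] (Y j) ∧ MemLinfMinus μ (Y j)) ∧
  (∀ᵐ ω ∂μ, Y J ω ≤ ξ ω) ∧
  (∀ j < J, ∀ᵐ ω ∂μ, Y j ω ≤ F j ω (cexpV μ (ℱ j) (bprod β Y (j + 1)) ω))

/-- The monotonicity assumption: `Y⁽¹⁾ ≥ Y⁽²⁾` a.s. implies
`F_j(β_{j+1} Y⁽¹⁾) ≥ F_j(β_{j+1} Y⁽²⁾)` a.s. -/
def MonoAssumption (μ : Measure Ω) (J D : ℕ)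
    (F : ℕ → Ω → (Fin D → ℝ) → ℝ) (β : ℕ → Ω → Fin D → ℝ) : Prop :=
  ∀ j < J, ∀ Y1 Y2 : Ω → ℝ, MemLinfMinus μ Y1 → MemLinfMinus μ Y2 →
    (∀ᵐ ω ∂μ, Y2 ω ≤ Y1 ω) →
    ∀ᵐ ω ∂μ, F j ω (fun d => β (j + 1) ω d * Y2 ω) ≤ F j ω (fun d => β (j + 1) ω d * Y1 ω)

/-- The class `M_D` of `ℝ^D`-valued `L^{∞-}` martingales. -/
def IsMartD (μ : Measure Ω) (ℱ : Filtration ℕ m0) {D : ℕ}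
    (M : ℕ → Ω → Fin D → ℝ) : Prop :=
  Martingale M ℱ μ ∧ ∀ j, MemLinfMinus μ (M j)

/-- Admissible controls on the time indices `{j₀, ..., J-1}` (the class `A_{j₀}`). -/
def IsAdmissibleFrom (μ : Measure Ω) (ℱ : Filtration ℕ m0) (j₀ J D : ℕ)
    (F : ℕ → Ω → (Fin D → ℝ) → ℝ) (r : ℕ → Ω → Fin D → ℝ) : Prop :=
  ∀ i, j₀ ≤ i → i < J →
    StronglyMeasurable[ℱ i] (r i) ∧ MemLinfMinus μ (r i) ∧
    (∀ᵐ ω ∂μ, econj (F i ω) (r i ω) ≠ ⊤) ∧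
    MemLinfMinus μ (fun ω => rconj (F i ω) (r i ω))

/-- The lower pathwise recursion `θ^{low}(r, M)`:
`θ_J = ξ`, `θ_i = r_i^⊤ (β_{i+1} θ_{i+1}) - r_i^⊤ ΔM_{i+1} - F_i^{#}(r_i)`,
required on the time indices `{j₀, ..., J-1}`. -/
def IsThetaLowFrom (μ : Measure Ω) (j₀ J D : ℕ)
    (F : ℕ → Ω → (Fin D → ℝ) → ℝ) (β : ℕ → Ω → Fin D → ℝ) (ξ : Ω → ℝ)
    (r M : ℕ → Ω → Fin D → ℝ) (θ : ℕ → Ω → ℝ) : Prop :=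
  (∀ᵐ ω ∂μ, θ J ω = ξ ω) ∧
  ∀ i, j₀ ≤ i → i < J → ∀ᵐ ω ∂μ,
    θ i ω = dotp (r i ω) (fun d => β (i + 1) ω d * θ (i + 1) ω)
      - dotp (r i ω) (fun d => M (i + 1) ω d - M i ω d) - rconj (F i ω) (r i ω)

/-- The upper pathwise recursion `θ^{up}(M)`:
`θ_J = ξ`, `θ_j = F_j(β_{j+1} θ_{j+1} - ΔM_{j+1})`. -/
def IsThetaUp (μ : Measure Ω) (J D : ℕ)
    (F : ℕ → Ω → (Fin D → ℝ) → ℝ) (β : ℕ → Ω → Fin D → ℝ) (ξ : Ω → ℝ)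
    (M : ℕ → Ω → Fin D → ℝ) (θ : ℕ → Ω → ℝ) : Prop :=
  (∀ᵐ ω ∂μ, θ J ω = ξ ω) ∧
  ∀ j < J, ∀ᵐ ω ∂μ,
    θ j ω = F j ω (fun d => β (j + 1) ω d * θ (j + 1) ω - (M (j + 1) ω d - M j ω d))

/-- The optimality condition `r_i^⊤ E_i[β_{i+1} Y_{i+1}] - F_i^{#}(r_i) = F_i(E_i[β_{i+1} Y_{i+1}])`
on the time indices `{j₀, ..., J-1}`. -/
def OptimalityCond (μ : Measure Ω) (ℱ : Filtration ℕ m0) (j₀ J D : ℕ)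
    (F : ℕ → Ω → (Fin D → ℝ) → ℝ) (β : ℕ → Ω → Fin D → ℝ)
    (Y : ℕ → Ω → ℝ) (r : ℕ → Ω → Fin D → ℝ) : Prop :=
  ∀ i, j₀ ≤ i → i < J → ∀ᵐ ω ∂μ,
    dotp (r i ω) (cexpV μ (ℱ i) (bprod β Y (i + 1)) ω) - rconj (F i ω) (r i ω)
      = F i ω (cexpV μ (ℱ i) (bprod β Y (i + 1)) ω)


section AuxLemmas
variable {Ω : Type*} {m0 : MeasurableSpace Ω}

namespace MemLinfMinus
variable {μ : Measure Ω}

lemma integrable {E : Type*} [NormedAddCommGroup E] {f : Ω → E} (hf : MemLinfMinus μ f) :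
    Integrable f μ :=
  memLp_one_iff_integrable.mp (hf 1 le_rfl ENNReal.one_ne_top)

lemma aesm {E : Type*} [NormedAddCommGroup E] {f : Ω → E} (hf : MemLinfMinus μ f) :
    AEStronglyMeasurable f μ := (hf 1 le_rfl ENNReal.one_ne_top).1

lemma congr {E : Type*} [NormedAddCommGroup E] {f g : Ω → E} (hf : MemLinfMinus μ f)
    (h : f =ᵐ[μ] g) : MemLinfMinus μ g := fun p hp hpt => (hf p hp hpt).ae_eq h

lemma add {f g : Ω → ℝ} (hf : MemLinfMinus μ f) (hg : MemLinfMinus μ g) :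
    MemLinfMinus μ (fun ω => f ω + g ω) := fun p hp hpt => (hf p hp hpt).add (hg p hp hpt)

lemma sub {f g : Ω → ℝ} (hf : MemLinfMinus μ f) (hg : MemLinfMinus μ g) :
    MemLinfMinus μ (fun ω => f ω - g ω) := fun p hp hpt => (hf p hp hpt).sub (hg p hp hpt)

lemma mul {f g : Ω → ℝ} (hf : MemLinfMinus μ f) (hg : MemLinfMinus μ g) :
    MemLinfMinus μ (fun ω => f ω * g ω) := by
  intro p hp hpt
  have h2p : (1 : ℝ≥0∞) ≤ 2 * p := hp.trans (le_mul_of_one_le_left zero_le one_le_two)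
  have h2pt : 2 * p ≠ ⊤ := ENNReal.mul_ne_top ENNReal.ofNat_ne_top hpt
  have hpqr : 1 / p = 1 / (2 * p) + 1 / (2 * p) := by
    rw [ENNReal.div_add_div_same, show (1 + 1 : ℝ≥0∞) = 2 * 1 by norm_num,
      ENNReal.mul_div_mul_left 1 p two_ne_zero ENNReal.ofNat_ne_top]
  haveI : ENNReal.HolderTriple (2 * p) (2 * p) p := ⟨by simpa [one_div] using hpqr.symm⟩
  have := (hg (2 * p) h2p h2pt).smul (𝕜 := ℝ) (hf (2 * p) h2p h2pt) (r := p)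
  exact this

lemma sum {ι : Type*} {s : Finset ι} {f : ι → Ω → ℝ} (hf : ∀ i ∈ s, MemLinfMinus μ (f i)) :
    MemLinfMinus μ (fun ω => ∑ i ∈ s, f i ω) := fun p hp hpt => by
  have := memLp_finset_sum' (μ := μ) (p := p) s (f := f) (fun i hi => hf i hi p hp hpt)
  have heq : (∑ i ∈ s, f i) = fun ω => ∑ i ∈ s, f i ω := by funext ω; simp
  rwa [heq] at this

lemma eval {D : ℕ} {f : Ω → Fin D → ℝ} (hf : MemLinfMinus μ f) (d : Fin D) :
    MemLinfMinus μ (fun ω => f ω d) := by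
  intro p hp hpt
  have h := hf p hp hpt
  refine MemLp.of_le h ((continuous_apply d).comp_aestronglyMeasurable h.1) ?_
  exact Filter.Eventually.of_forall fun ω => norm_le_pi_norm (f ω) d

lemma const [IsFiniteMeasure μ] (c : ℝ) : MemLinfMinus μ (fun _ => c) := fun p _ _ => memLp_const c

end MemLinfMinus

lemma fenchel_young {D : ℕ} (f : (Fin D → ℝ) → ℝ) (u : Fin D → ℝ)
    (h : econj f u ≠ ⊤) (z : Fin D → ℝ) : dotp u z - f z ≤ rconj f u := by
  have hle : ((dotp u z - f z : ℝ) : EReal) ≤ econj f u :=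
    le_iSup (fun z => ((dotp u z - f z : ℝ) : EReal)) z
  have := EReal.toReal_le_toReal hle (EReal.coe_ne_bot _) h
  rw [EReal.toReal_coe] at this
  exact this

/-- Key pointwise lemma: if `f` is convex, monotone along the line `t ↦ t • v`
(at nonpositive even integers suffices), and `u` attains the Fenchel equality at `zb`,
then `u ⬝ v ≥ 0`. -/
lemma key_pw {D : ℕ} (f : (Fin D → ℝ) → ℝ) (hconv : ConvexOn ℝ Set.univ f)
    (u v zb : Fin D → ℝ) (hft : econj f u ≠ ⊤)
    (hopt : dotp u zb - rconj f u = f zb)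
    (hmono : ∀ n : ℕ, f (fun d => v d * (-(2 * n) : ℝ)) ≤ f (fun d => v d * 0)) :
    0 ≤ dotp u v := by
  by_contra hneg
  push_neg at hneg
  set C : ℝ := (1/2 : ℝ) * f (2 • zb) + (1/2 : ℝ) * f (fun d => v d * 0) with hC
  have hbound : ∀ n : ℕ, f zb - n * dotp u v ≤ C := by
    intro n
    have hcc : zb - (n : ℝ) • v
        = (1/2 : ℝ) • (2 • zb) + (1/2 : ℝ) • (fun d => v d * (-(2 * n) : ℝ)) := by
      funext d
      simp [Pi.smul_apply, smul_eq_mul, Pi.sub_apply]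
      ring
    have hconv' := hconv.2 (Set.mem_univ (2 • zb))
      (Set.mem_univ (fun d => v d * (-(2 * n) : ℝ)))
      (by norm_num : (0:ℝ) ≤ 1/2) (by norm_num : (0:ℝ) ≤ 1/2)
      (by norm_num : (1/2 : ℝ) + 1/2 = 1)
    rw [← hcc] at hconv'
    simp only [smul_eq_mul] at hconv'
    have h1 : f (zb - (n : ℝ) • v) ≤ C := by
      refine hconv'.trans ?_
      rw [hC]
      have := hmono n
      nlinarith
    have hfy := fenchel_young f u hft (zb - (n : ℝ) • v)
    have hdot : dotp u (zb - (n : ℝ) • v) = dotp u zb - n * dotp u v := by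
      simp only [dotp, Pi.sub_apply, Pi.smul_apply, smul_eq_mul, mul_sub,
        Finset.sum_sub_distrib, Finset.mul_sum]
      congr 1
      exact Finset.sum_congr rfl fun d _ => by ring
    have h2 : dotp u zb - n * dotp u v - f (zb - (n : ℝ) • v) ≤ rconj f u := by
      rw [← hdot]; exact hfy
    linarith [hopt, h1, h2]
  obtain ⟨n, hn⟩ := exists_nat_gt ((C - f zb) / (-(dotp u v)))
  have hpos : (0:ℝ) < -(dotp u v) := by linarith
  have := hbound n
  rw [div_lt_iff₀ hpos] at hn
  nlinarith

lemma measF_comp {D : ℕ} {m : MeasurableSpace Ω} {f : Ω → (Fin D → ℝ) → ℝ}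
    (hcont : ∀ ω, Continuous (f ω))
    (hadapt : ∀ z : Fin D → ℝ, StronglyMeasurable[m] fun ω => f ω z)
    {g : Ω → Fin D → ℝ} (hg : Measurable[m] g) :
    StronglyMeasurable[m] fun ω => f ω (g ω) := by
  have h := @stronglyMeasurable_uncurry_of_continuous_of_stronglyMeasurable
    Ω ℝ (Fin D → ℝ) _ _ _ _ _ _ _ m (fun z ω => f ω z) hcont hadapt
  exact h.comp_measurable (Measurable.prodMk hg measurable_id)

/-- Conditional expectation commutes with coordinate evaluation. -/
lemma condExp_proj {μ : Measure Ω} {m : MeasurableSpace Ω} (hm : m ≤ m0)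
    [SigmaFinite (μ.trim hm)]
    {D : ℕ} {f : Ω → Fin D → ℝ} (hf : Integrable f μ) (d : Fin D) :
    μ[fun ω => f ω d|m] =ᵐ[μ] fun ω => (μ[f|m]) ω d := by
  letI : MeasurableSpace Ω := m0
  set L : (Fin D → ℝ) →L[ℝ] ℝ := ContinuousLinearMap.proj d with hL
  have hci : Integrable (μ[f|m]) μ := integrable_condExp
  have hfd : Integrable (fun ω => L (f ω)) μ := L.integrable_comp hf
  have key : (fun ω => L ((μ[f|m]) ω)) =ᵐ[μ] μ[fun ω => L (f ω)|m] := by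
    refine ae_eq_condExp_of_forall_setIntegral_eq hm hfd
      (fun s _ _ => (L.integrable_comp hci).restrict) (fun s hs hμs => ?_)
      (L.continuous.comp_stronglyMeasurable stronglyMeasurable_condExp).aestronglyMeasurable
    have e1 : ∫ x in s, L ((μ[f|m]) x) ∂μ = L (∫ x in s, (μ[f|m]) x ∂μ) :=
      L.integral_comp_comm hci.restrict
    have e2 : ∫ x in s, L (f x) ∂μ = L (∫ x in s, f x ∂μ) :=
      L.integral_comp_comm hf.restrict
    rw [e1, e2, setIntegral_condExp hm hf hs]
  have h2 := key.symm
  simp only [hL, ContinuousLinearMap.proj_apply] at h2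
  exact h2

lemma sum_indicator_eval {n : ℕ} (g : Fin n → Ω → ℝ) (σ : Ω → Fin n) (ω : Ω) :
    (∑ l : Fin n, Set.indicator {ω' | σ ω' = l} (g l) ω) = g (σ ω) ω := by
  rw [Finset.sum_eq_single (σ ω)]
  · simp [Set.indicator_of_mem, Set.mem_setOf_eq]
  · intro l _ hne
    exact Set.indicator_of_notMem (by simpa using (Ne.symm hne)) _
  · simp

end AuxLemmas


/-- Simultaneous improvement of a family of subsolutions: with `Ȳ` the
subsolution built from the family `(Ȳ^{l})_{l ∈ I}` via the maximizing selector `l*` over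
nondecreasing sets `K(j)`, and `r̄ ∈ A_0` satisfying the optimality condition with respect to
`Ȳ`, for any `M ∈ M_D` it holds `P`-a.s. for all `j = 0,…,J-1` that
`E_j[θ_j^{low}(r̄,M)] ≥ F_j(E_j[β_{j+1} Ȳ_{j+1}]) = max_{l ∈ K(j+1)} F_j(E_j[β_{j+1} Ȳ_{j+1}^{l}])
≥ max_{l ∈ K(j+1)} Ȳ_j^{l}`. -/
theorem family_of_subsolutions_improvement
    (μ : Measure Ω) [IsProbabilityMeasure μ] (ℱ : Filtration ℕ m0)
    (J D : ℕ) (hJ : 1 ≤ J)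
    (F : ℕ → Ω → (Fin D → ℝ) → ℝ) (β : ℕ → Ω → Fin D → ℝ) (ξ : Ω → ℝ)
    (hset : Setting μ ℱ J D F β ξ) (hmono : MonoAssumption μ J D F β)
    (n : ℕ) (Yfam : Fin n → ℕ → Ω → ℝ)
    (hfam : ∀ l, IsSubsolution μ ℱ J D F β ξ (Yfam l))
    (K : ℕ → Finset (Fin n))
    (hKne : ∀ j, (K j).Nonempty) (hKmono : ∀ j, K j ⊆ K (j + 1))
    (lstar : ℕ → Ω → Fin n)
    (hpred : ∀ j, 1 ≤ j → j ≤ J → Measurable[ℱ (j - 1)] (lstar j))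
    (hmem : ∀ j, 1 ≤ j → j ≤ J → ∀ᵐ ω ∂μ, lstar j ω ∈ K j)
    (hmax : ∀ j, 1 ≤ j → j ≤ J → ∀ᵐ ω ∂μ, ∀ l ∈ K j,
      F (j - 1) ω (cexpV μ (ℱ (j - 1)) (bprod β (Yfam l) j) ω)
        ≤ F (j - 1) ω (cexpV μ (ℱ (j - 1)) (bprod β (Yfam (lstar j ω)) j) ω))
    (Ybar : ℕ → Ω → ℝ)
    (hYbar0 : ∀ᵐ ω ∂μ, Ybar 0 ω = F 0 ω (cexpV μ (ℱ 0) (bprod β Ybar 1) ω))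
    (hYbarj : ∀ j, 1 ≤ j → j ≤ J → ∀ᵐ ω ∂μ, Ybar j ω = Yfam (lstar j ω) j ω)
    (r : ℕ → Ω → Fin D → ℝ)
    (hr : IsAdmissibleFrom μ ℱ 0 J D F r)
    (hropt : OptimalityCond μ ℱ 0 J D F β Ybar r)
    (M : ℕ → Ω → Fin D → ℝ) (hM : IsMartD μ ℱ M)
    (θ : ℕ → Ω → ℝ) (hθ : IsThetaLowFrom μ 0 J D F β ξ r M θ) :
    ∀ j < J, ∀ᵐ ω ∂μ,
      F j ω (cexpV μ (ℱ j) (bprod β Ybar (j + 1)) ω)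
          = (K (j + 1)).sup' (hKne (j + 1))
              (fun l => F j ω (cexpV μ (ℱ j) (bprod β (Yfam l) (j + 1)) ω)) ∧
      (K (j + 1)).sup' (hKne (j + 1)) (fun l => Yfam l j ω)
          ≤ F j ω (cexpV μ (ℱ j) (bprod β Ybar (j + 1)) ω) ∧
      F j ω (cexpV μ (ℱ j) (bprod β Ybar (j + 1)) ω) ≤ (μ[θ j|ℱ j]) ω := by
  classical
  have hle : ∀ k, (ℱ k : MeasurableSpace Ω) ≤ m0 := fun k => ℱ.le k
  have hYmem : ∀ l, ∀ j, j ≤ J → MemLinfMinus μ (Yfam l j) := fun l j hj => ((hfam l).1 j hj).2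
  have hβd : ∀ j, j ≤ J → ∀ d, MemLinfMinus μ (fun ω => β j ω d) :=
    fun j hj d => (hset.β_int j hj).eval d
  have hA : ∀ j, 1 ≤ j → j ≤ J → ∀ l : Fin n,
      MeasurableSet[ℱ (j - 1)] {ω' | lstar j ω' = l} :=
    fun j h1 hj l => hpred j h1 hj (measurableSet_singleton l)
  -- L^{∞-} bound for Ybar at positive times
  have hYbarmem : ∀ j, 1 ≤ j → j ≤ J → MemLinfMinus μ (Ybar j) := by
    intro j h1 hj
    have hrep : (fun ω => ∑ l : Fin n, Set.indicator {ω' | lstar j ω' = l} (Yfam l j) ω)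
        =ᵐ[μ] Ybar j := by
      filter_upwards [hYbarj j h1 hj] with ω hω
      rw [sum_indicator_eval, ← hω]
    have hsum : MemLinfMinus μ
        (fun ω => ∑ l : Fin n, Set.indicator {ω' | lstar j ω' = l} (Yfam l j) ω) := by
      refine MemLinfMinus.sum (fun l _ => ?_)
      intro p hp hpt
      exact MemLp.indicator (hle (j - 1) _ (hA j h1 hj l)) (hYmem l j hj p hp hpt)
    exact hsum.congr hrep
  -- Fact A : the selector can be pulled out of the conditional expectation
  have hselA : ∀ k, k < J → ∀ᵐ ω ∂μ, ∀ d,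
      cexpV μ (ℱ k) (bprod β Ybar (k + 1)) ω d
        = cexpV μ (ℱ k) (bprod β (Yfam (lstar (k + 1) ω)) (k + 1)) ω d := by
    intro k hk
    rw [ae_all_iff]
    intro d
    have h1k : (1 : ℕ) ≤ k + 1 := by omega
    have hk1 : k + 1 ≤ J := by omega
    have hAk : ∀ l : Fin n, MeasurableSet[ℱ k] {ω' | lstar (k + 1) ω' = l} := by
      intro l
      have := hA (k + 1) h1k hk1 l
      simpa using this
    have hgint : ∀ l : Fin n, Integrable (fun ω => β (k + 1) ω d * Yfam l (k + 1) ω) μ :=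
      fun l => ((hβd (k + 1) hk1 d).mul (hYmem l (k + 1) hk1)).integrable
    have h1 : (fun ω => β (k + 1) ω d * Ybar (k + 1) ω)
        =ᵐ[μ] fun ω => ∑ l : Fin n, Set.indicator {ω' | lstar (k + 1) ω' = l}
            (fun ω' => β (k + 1) ω' d * Yfam l (k + 1) ω') ω := by
      filter_upwards [hYbarj (k + 1) h1k hk1] with ω hω
      rw [sum_indicator_eval (fun l ω' => β (k + 1) ω' d * Yfam l (k + 1) ω') (lstar (k + 1)) ω,
        hω]
    have hfe : (fun ω => ∑ l : Fin n, Set.indicator {ω' | lstar (k + 1) ω' = l}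
          (fun ω' => β (k + 1) ω' d * Yfam l (k + 1) ω') ω)
        = ∑ l : Fin n, Set.indicator {ω' | lstar (k + 1) ω' = l}
            (fun ω' => β (k + 1) ω' d * Yfam l (k + 1) ω') := by
      funext ω; simp
    have hs : μ[fun ω => β (k + 1) ω d * Ybar (k + 1) ω|ℱ k]
        =ᵐ[μ] ∑ l : Fin n, μ[Set.indicator {ω' | lstar (k + 1) ω' = l}
            (fun ω' => β (k + 1) ω' d * Yfam l (k + 1) ω')|ℱ k] := by
      refine (condExp_congr_ae h1).trans ?_
      rw [hfe]
      exact condExp_finset_sum (fun l _ => (hgint l).indicator (hle k _ (hAk l))) _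
    have hptw : ∀ᵐ ω ∂μ, ∀ l : Fin n,
        (μ[Set.indicator {ω' | lstar (k + 1) ω' = l}
            (fun ω' => β (k + 1) ω' d * Yfam l (k + 1) ω')|ℱ k]) ω
          = Set.indicator {ω' | lstar (k + 1) ω' = l}
              (μ[fun ω' => β (k + 1) ω' d * Yfam l (k + 1) ω'|ℱ k]) ω :=
      ae_all_iff.2 fun l => condExp_indicator (hgint l) (hAk l)
    filter_upwards [hs, hptw] with ω hω hω2
    have heval : (μ[fun ω' => β (k + 1) ω' d * Ybar (k + 1) ω'|ℱ k]) ω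
        = (μ[fun ω' => β (k + 1) ω' d * Yfam (lstar (k + 1) ω) (k + 1) ω'|ℱ k]) ω := by
      rw [hω, Finset.sum_apply]
      have := sum_indicator_eval
        (fun l => (μ[fun ω' => β (k + 1) ω' d * Yfam l (k + 1) ω'|ℱ k])) (lstar (k + 1)) ω
      rw [← this]
      exact Finset.sum_congr rfl fun l _ => hω2 l
    simpa only [cexpV, bprod] using heval
  have hFsel : ∀ k, k < J → ∀ᵐ ω ∂μ,
      F k ω (cexpV μ (ℱ k) (bprod β Ybar (k + 1)) ω)
        = F k ω (cexpV μ (ℱ k) (bprod β (Yfam (lstar (k + 1) ω)) (k + 1)) ω) := by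
    intro k hk
    filter_upwards [hselA k hk] with ω hω
    congr 1
    funext d
    exact hω d
  -- Part 1 : the max identity
  have hEq : ∀ k, k < J → ∀ᵐ ω ∂μ,
      F k ω (cexpV μ (ℱ k) (bprod β Ybar (k + 1)) ω)
        = (K (k + 1)).sup' (hKne (k + 1))
            (fun l => F k ω (cexpV μ (ℱ k) (bprod β (Yfam l) (k + 1)) ω)) := by
    intro k hk
    have h1k : (1 : ℕ) ≤ k + 1 := by omega
    have hk1 : k + 1 ≤ J := by omega
    have hmax' : ∀ᵐ ω ∂μ, ∀ l ∈ K (k + 1),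
        F k ω (cexpV μ (ℱ k) (bprod β (Yfam l) (k + 1)) ω)
          ≤ F k ω (cexpV μ (ℱ k) (bprod β (Yfam (lstar (k + 1) ω)) (k + 1)) ω) := by
      have := hmax (k + 1) h1k hk1
      simpa using this
    filter_upwards [hFsel k hk, hmax', hmem (k + 1) h1k hk1] with ω h1 h2 h3
    refine le_antisymm ?_ (Finset.sup'_le _ _ fun l hl => (h2 l hl).trans (le_of_eq h1.symm))
    rw [h1]
    exact Finset.le_sup' (fun l => F k ω (cexpV μ (ℱ k) (bprod β (Yfam l) (k + 1)) ω)) h3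
  -- Part 2
  have hPart2 : ∀ k, k < J → ∀ᵐ ω ∂μ,
      (K (k + 1)).sup' (hKne (k + 1)) (fun l => Yfam l k ω)
        ≤ F k ω (cexpV μ (ℱ k) (bprod β Ybar (k + 1)) ω) := by
    intro k hk
    have hsub : ∀ᵐ ω ∂μ, ∀ l : Fin n,
        Yfam l k ω ≤ F k ω (cexpV μ (ℱ k) (bprod β (Yfam l) (k + 1)) ω) :=
      ae_all_iff.2 fun l => (hfam l).2.2 k hk
    filter_upwards [hEq k hk, hsub] with ω h1 h2
    refine Finset.sup'_le _ _ fun l hl => (h2 l).trans ?_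
    exact le_trans (Finset.le_sup'
      (fun l => F k ω (cexpV μ (ℱ k) (bprod β (Yfam l) (k + 1)) ω)) hl) h1.symm.le
  -- one-step improvement inequality for Ybar
  have hYbarLe : ∀ k, k < J → ∀ᵐ ω ∂μ,
      Ybar k ω ≤ F k ω (cexpV μ (ℱ k) (bprod β Ybar (k + 1)) ω) := by
    intro k hk
    rcases Nat.eq_zero_or_pos k with rfl | hkpos
    · filter_upwards [hYbar0] with ω hω
      exact le_of_eq hω
    · filter_upwards [hYbarj k hkpos (le_of_lt hk), hmem k hkpos (le_of_lt hk),
        hPart2 k hk] with ω h1 h2 h3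
      rw [h1]
      exact le_trans (Finset.le_sup' (f := fun l => Yfam l k ω) (hKmono k h2)) h3
  -- Fact E : nonnegativity of r·β
  have hκ : ∀ k, k < J → ∀ᵐ ω ∂μ, 0 ≤ dotp (r k ω) (β (k + 1) ω) := by
    intro k hk
    have hconstmono : ∀ᵐ ω ∂μ, ∀ nn : ℕ,
        F k ω (fun d => β (k + 1) ω d * (-(2 * (nn : ℝ)))) ≤ F k ω (fun d => β (k + 1) ω d * 0) := by
      rw [ae_all_iff]
      intro nn
      exact hmono k hk (fun _ => (0 : ℝ)) (fun _ => (-(2 * (nn : ℝ)))) (MemLinfMinus.const 0)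
        (MemLinfMinus.const _)
        (Filter.Eventually.of_forall fun ω => neg_nonpos.mpr (by positivity))
    filter_upwards [hropt k (Nat.zero_le k) hk, (hr k (Nat.zero_le k) hk).2.2.1,
      hconstmono] with ω h1 h2 h3
    exact key_pw (F k ω) (hset.F_convex k hk ω) (r k ω) (β (k + 1) ω)
      (cexpV μ (ℱ k) (bprod β Ybar (k + 1)) ω) h2 h1 h3
  -- conditional expectation of rconj
  have hEc : ∀ k, k < J →
      μ[(fun ω => rconj (F k ω) (r k ω))|ℱ k] =ᵐ[μ] fun ω => rconj (F k ω) (r k ω) := by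
    intro k hk
    have hzbm : Measurable[ℱ k] fun ω => cexpV μ (ℱ k) (bprod β Ybar (k + 1)) ω := by
      exact (@measurable_pi_iff Ω (Fin D) (fun _ => ℝ) (ℱ k) _
        (fun ω => cexpV μ (ℱ k) (bprod β Ybar (k + 1)) ω)).mpr
        fun d => stronglyMeasurable_condExp.measurable
    have hFcomp : StronglyMeasurable[ℱ k]
        fun ω => F k ω (cexpV μ (ℱ k) (bprod β Ybar (k + 1)) ω) :=
      measF_comp
        (fun ω => continuousOn_univ.mp
          ((hset.F_convex k hk ω).continuousOn isOpen_univ))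
        (hset.F_adapted k hk) hzbm
    have hc'sm : StronglyMeasurable[ℱ k]
        (fun ω => dotp (r k ω) (cexpV μ (ℱ k) (bprod β Ybar (k + 1)) ω)
          - F k ω (cexpV μ (ℱ k) (bprod β Ybar (k + 1)) ω)) := by
      refine StronglyMeasurable.sub ?_ hFcomp
      apply Measurable.stronglyMeasurable
      simp only [dotp]
      refine Finset.measurable_sum _ fun d _ => Measurable.mul ?_ ?_
      · exact (((continuous_apply d).comp_stronglyMeasurable
          (hr k (Nat.zero_le k) hk).1).measurable)
      · exact (measurable_pi_apply d).comp hzbm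
    have hcae : (fun ω => rconj (F k ω) (r k ω))
        =ᵐ[μ] fun ω => dotp (r k ω) (cexpV μ (ℱ k) (bprod β Ybar (k + 1)) ω)
          - F k ω (cexpV μ (ℱ k) (bprod β Ybar (k + 1)) ω) := by
      filter_upwards [hropt k (Nat.zero_le k) hk] with ω h1
      linarith [h1]
    have hcint : Integrable (fun ω => dotp (r k ω) (cexpV μ (ℱ k) (bprod β Ybar (k + 1)) ω)
        - F k ω (cexpV μ (ℱ k) (bprod β Ybar (k + 1)) ω)) μ :=
      ((hr k (Nat.zero_le k) hk).2.2.2.integrable).congr hcae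
    have h4 := condExp_of_stronglyMeasurable (hle k) hc'sm hcint
    refine (condExp_congr_ae hcae).trans ?_
    rw [h4]
    exact hcae.symm
  -- martingale increments have vanishing conditional expectation
  have hMδ : ∀ k, k < J → ∀ d : Fin D,
      μ[fun ω => M (k + 1) ω d - M k ω d|ℱ k] =ᵐ[μ] 0 := by
    intro k hk d
    have hint1 : Integrable (fun ω => M (k + 1) ω d) μ := ((hM.2 (k + 1)).eval d).integrable
    have hint0 : Integrable (fun ω => M k ω d) μ := ((hM.2 k).eval d).integrable
    have h1 : μ[fun ω => M (k + 1) ω d|ℱ k] =ᵐ[μ] fun ω => M k ω d := by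
      refine (condExp_proj (hle k) (hM.2 (k + 1)).integrable d).trans ?_
      filter_upwards [hM.1.condExp_ae_eq (Nat.le_succ k)] with ω hω
      exact congrFun hω d
    have h2 : μ[fun ω => M k ω d|ℱ k] = fun ω => M k ω d :=
      condExp_of_stronglyMeasurable (hle k)
        ((continuous_apply d).comp_stronglyMeasurable (hM.1.stronglyAdapted k)) hint0
    have e : (fun ω => M (k + 1) ω d - M k ω d)
        = (fun ω => M (k + 1) ω d) - (fun ω => M k ω d) := rfl
    rw [e]
    refine (condExp_sub hint1 hint0 _).trans ?_
    rw [h2]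
    filter_upwards [h1] with ω hω
    simp only [Pi.sub_apply, Pi.zero_apply, hω]
    ring
  -- the backward induction
  have main : ∀ m k, k + m = J →
      MemLinfMinus μ (θ k) ∧
      (∀ᵐ ω ∂μ, Ybar k ω ≤ (μ[θ k|ℱ k]) ω) ∧
      (∀ _ : k < J, ∀ᵐ ω ∂μ,
        F k ω (cexpV μ (ℱ k) (bprod β Ybar (k + 1)) ω) ≤ (μ[θ k|ℱ k]) ω) := by
    intro m
    induction m with
    | zero =>
      intro k hkJ
      have hkeq : k = J := by omega
      subst hkeq
      have hθJ : θ k =ᵐ[μ] ξ := hθ.1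
      have hmemθ : MemLinfMinus μ (θ k) := hset.ξ_int.congr hθJ.symm
      have hcond : μ[θ k|ℱ k] =ᵐ[μ] ξ := by
        refine (condExp_congr_ae hθJ).trans ?_
        rw [condExp_of_stronglyMeasurable (hle k) hset.ξ_meas hset.ξ_int.integrable]
      have hsub : ∀ᵐ ω ∂μ, ∀ l : Fin n, Yfam l k ω ≤ ξ ω := ae_all_iff.2 fun l => (hfam l).2.1
      refine ⟨hmemθ, ?_, fun hcon => absurd hcon (lt_irrefl k)⟩
      filter_upwards [hcond, hYbarj k hJ le_rfl, hsub] with ω h1 h2 h3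
      rw [h1, h2]
      exact h3 _
    | succ m ih =>
      intro k hkJ
      have hk : k < J := by omega
      have IH := ih (k + 1) (by omega)
      have hk1 : k + 1 ≤ J := hk
      have hrsm := (hr k (Nat.zero_le k) hk).1
      have hrmem := (hr k (Nat.zero_le k) hk).2.1
      have hcmem := (hr k (Nat.zero_le k) hk).2.2.2
      have hrd : ∀ d : Fin D, MemLinfMinus μ (fun ω => r k ω d) := fun d => hrmem.eval d
      set w : Ω → ℝ := fun ω => dotp (r k ω) (β (k + 1) ω) with hw
      set B : Ω → ℝ := fun ω => ∑ d, r k ω d * (M (k + 1) ω d - M k ω d) with hB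
      set c : Ω → ℝ := fun ω => rconj (F k ω) (r k ω) with hc
      have hwmem : MemLinfMinus μ w := by
        rw [hw]
        simp only [dotp]
        exact MemLinfMinus.sum fun d _ => (hrd d).mul (hβd (k + 1) hk1 d)
      have hwsm : StronglyMeasurable[ℱ (k + 1)] w := by
        apply Measurable.stronglyMeasurable
        rw [hw]
        simp only [dotp]
        refine Finset.measurable_sum _ fun d _ => Measurable.mul ?_ ?_
        · exact (((continuous_apply d).comp_stronglyMeasurable hrsm).mono
            (ℱ.mono (Nat.le_succ k))).measurable
        · exact ((continuous_apply d).comp_stronglyMeasurable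
            (hset.β_adapted (k + 1) hk1)).measurable
      have hθ'mem : MemLinfMinus μ (θ (k + 1)) := IH.1
      have hYb1mem : MemLinfMinus μ (Ybar (k + 1)) := hYbarmem (k + 1) (by omega) hk1
      have hθk' : θ k =ᵐ[μ] fun ω => w ω * θ (k + 1) ω - B ω - c ω := by
        filter_upwards [hθ.2 k (Nat.zero_le k) hk] with ω hω
        simp only [hw, hB, hc, dotp] at hω ⊢
        rw [hω]
        have hx : ∑ d, r k ω d * (β (k + 1) ω d * θ (k + 1) ω)
            = (∑ d, r k ω d * β (k + 1) ω d) * θ (k + 1) ω := by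
          rw [Finset.sum_mul]
          exact Finset.sum_congr rfl fun d _ => by ring
        rw [hx]
      have hBmem : MemLinfMinus μ B := by
        rw [hB]
        exact MemLinfMinus.sum fun d _ =>
          (hrd d).mul (((hM.2 (k + 1)).eval d).sub ((hM.2 k).eval d))
      have hwθmem : MemLinfMinus μ (fun ω => w ω * θ (k + 1) ω) := hwmem.mul hθ'mem
      have hθkmem : MemLinfMinus μ (θ k) := ((hwθmem.sub hBmem).sub hcmem).congr hθk'.symm
      have hintwθ := hwθmem.integrable
      have hintB := hBmem.integrable
      have hintc : Integrable c μ := hcmem.integrable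
      have E2 : μ[θ k|ℱ k] =ᵐ[μ]
          fun ω => (μ[fun ω' => w ω' * θ (k + 1) ω'|ℱ k]) ω - (μ[B|ℱ k]) ω - (μ[c|ℱ k]) ω := by
        refine (condExp_congr_ae hθk').trans ?_
        have e0 : (fun ω => w ω * θ (k + 1) ω - B ω - c ω)
            = ((fun ω => w ω * θ (k + 1) ω) - B - c) := rfl
        rw [e0]
        have h1 := condExp_sub (μ := μ) (m := ℱ k) (hintwθ.sub hintB) hintc
        have h2 := condExp_sub (μ := μ) (m := ℱ k) hintwθ hintB
        filter_upwards [h1, h2] with ω hω1 hω2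
        simp only [Pi.sub_apply] at hω1 hω2 ⊢
        rw [hω1, hω2]
      have EB : μ[B|ℱ k] =ᵐ[μ] 0 := by
        have hterm : ∀ d : Fin D,
            μ[fun ω => r k ω d * (M (k + 1) ω d - M k ω d)|ℱ k] =ᵐ[μ] 0 := by
          intro d
          have e : (fun ω => r k ω d * (M (k + 1) ω d - M k ω d))
              = (fun ω => r k ω d) * (fun ω => M (k + 1) ω d - M k ω d) := rfl
          have hintrm : Integrable ((fun ω => r k ω d) * fun ω => M (k + 1) ω d - M k ω d) μ := by
            rw [← e]
            exact ((hrd d).mul (((hM.2 (k + 1)).eval d).sub ((hM.2 k).eval d))).integrable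
          rw [e]
          refine (condExp_mul_of_stronglyMeasurable_left
            ((continuous_apply d).comp_stronglyMeasurable hrsm) hintrm
            ((((hM.2 (k + 1)).eval d).sub ((hM.2 k).eval d)).integrable)).trans ?_
          filter_upwards [hMδ k hk d] with ω hω
          simp only [Pi.mul_apply, Pi.zero_apply] at hω ⊢
          rw [hω]
          ring
        have hfe : B = ∑ d : Fin D, fun ω => r k ω d * (M (k + 1) ω d - M k ω d) := by
          rw [hB]
          funext ω
          simp
        have hsum : μ[B|ℱ k] =ᵐ[μ]
            ∑ d : Fin D, μ[fun ω => r k ω d * (M (k + 1) ω d - M k ω d)|ℱ k] := by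
          rw [hfe]
          exact condExp_finset_sum (fun d _ =>
            ((hrd d).mul (((hM.2 (k + 1)).eval d).sub ((hM.2 k).eval d))).integrable) _
        refine hsum.trans ?_
        have := ae_all_iff.2 hterm
        filter_upwards [this] with ω hω
        rw [Finset.sum_apply]
        simp only [Pi.zero_apply]
        refine Finset.sum_eq_zero fun d _ => ?_
        have := hω d
        simpa using this
      have G2 : μ[fun ω => w ω * θ (k + 1) ω|ℱ (k + 1)]
          =ᵐ[μ] fun ω => w ω * (μ[θ (k + 1)|ℱ (k + 1)]) ω := by
        have e : (fun ω => w ω * θ (k + 1) ω) = w * θ (k + 1) := rfl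
        rw [e]
        exact (condExp_mul_of_stronglyMeasurable_left hwsm (by rw [← e]; exact hintwθ)
          hθ'mem.integrable).trans (Filter.EventuallyEq.of_eq rfl)
      have hae1 : (fun ω => w ω * Ybar (k + 1) ω)
          ≤ᵐ[μ] μ[fun ω => w ω * θ (k + 1) ω|ℱ (k + 1)] := by
        filter_upwards [G2, IH.2.1, hκ k hk] with ω h2 h3 h4
        rw [h2]
        refine mul_le_mul_of_nonneg_left h3 ?_
        rw [hw]
        exact h4
      have G4 : μ[fun ω => w ω * Ybar (k + 1) ω|ℱ k]
          ≤ᵐ[μ] μ[μ[fun ω => w ω * θ (k + 1) ω|ℱ (k + 1)]|ℱ k] :=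
        condExp_mono (hwmem.mul hYb1mem).integrable integrable_condExp hae1
      have G1 : μ[μ[fun ω => w ω * θ (k + 1) ω|ℱ (k + 1)]|ℱ k]
          =ᵐ[μ] μ[fun ω => w ω * θ (k + 1) ω|ℱ k] :=
        condExp_condExp_of_le (ℱ.mono (Nat.le_succ k)) (hle (k + 1))
      have G5 : μ[fun ω => w ω * Ybar (k + 1) ω|ℱ k]
          =ᵐ[μ] fun ω => dotp (r k ω) (cexpV μ (ℱ k) (bprod β Ybar (k + 1)) ω) := by
        have hfe : (fun ω => w ω * Ybar (k + 1) ω)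
            = ∑ d : Fin D, fun ω => r k ω d * (β (k + 1) ω d * Ybar (k + 1) ω) := by
          funext ω
          rw [hw]
          simp only [Finset.sum_apply, dotp, Finset.sum_mul]
          exact Finset.sum_congr rfl fun d _ => by ring
        have hint_d : ∀ d : Fin D, Integrable (fun ω => β (k + 1) ω d * Ybar (k + 1) ω) μ :=
          fun d => ((hβd (k + 1) hk1 d).mul hYb1mem).integrable
        have hsum : μ[fun ω => w ω * Ybar (k + 1) ω|ℱ k] =ᵐ[μ]
            ∑ d : Fin D, μ[fun ω => r k ω d * (β (k + 1) ω d * Ybar (k + 1) ω)|ℱ k] := by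
          rw [hfe]
          exact condExp_finset_sum (fun d _ =>
            ((hrd d).mul ((hβd (k + 1) hk1 d).mul hYb1mem)).integrable) _
        have hterm : ∀ d : Fin D,
            μ[fun ω => r k ω d * (β (k + 1) ω d * Ybar (k + 1) ω)|ℱ k]
              =ᵐ[μ] fun ω => r k ω d * (μ[fun ω' => β (k + 1) ω' d * Ybar (k + 1) ω'|ℱ k]) ω := by
          intro d
          have e : (fun ω => r k ω d * (β (k + 1) ω d * Ybar (k + 1) ω))
              = (fun ω => r k ω d) * (fun ω => β (k + 1) ω d * Ybar (k + 1) ω) := rfl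
          rw [e]
          exact (condExp_mul_of_stronglyMeasurable_left
            ((continuous_apply d).comp_stronglyMeasurable hrsm)
            (by rw [← e]; exact ((hrd d).mul ((hβd (k + 1) hk1 d).mul hYb1mem)).integrable)
            (hint_d d)).trans (Filter.EventuallyEq.of_eq rfl)
        refine hsum.trans ?_
        have := ae_all_iff.2 hterm
        filter_upwards [this] with ω hω
        rw [Finset.sum_apply]
        simp only [cexpV, bprod, dotp]
        exact Finset.sum_congr rfl fun d _ => hω d
      have third : ∀ᵐ ω ∂μ,
          F k ω (cexpV μ (ℱ k) (bprod β Ybar (k + 1)) ω) ≤ (μ[θ k|ℱ k]) ω := by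
        have hEc' := hEc k hk
        rw [← hc] at hEc'
        filter_upwards [E2, EB, hEc', G4, G1, G5, hropt k (Nat.zero_le k) hk]
          with ω h1 h2 h3 h4 h5 h6 h7
        have hchain : dotp (r k ω) (cexpV μ (ℱ k) (bprod β Ybar (k + 1)) ω)
            ≤ (μ[fun ω' => w ω' * θ (k + 1) ω'|ℱ k]) ω := by
          rw [← h6, ← h5]
          exact h4
        rw [h1, h3]
        have h2' : (μ[B|ℱ k]) ω = 0 := by simpa using h2
        rw [h2']
        have hcc : c ω = rconj (F k ω) (r k ω) := by rw [hc]
        rw [hcc]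
        linarith [h7, hchain]
      have second : ∀ᵐ ω ∂μ, Ybar k ω ≤ (μ[θ k|ℱ k]) ω := by
        filter_upwards [hYbarLe k hk, third] with ω h1 h2
        exact h1.trans h2
      exact ⟨hθkmem, second, fun _ => third⟩
  intro j hj
  filter_upwards [hEq j hj, hPart2 j hj, (main (J - j) j (by omega)).2.2 hj] with ω h1 h2 h3
  exact ⟨h1, h2, h3⟩


end
end

section
/- Policy improvement for optimal stopping (Example): let S be an adapted integrable process, Y its Snell envelope given by Y_j = max{S_j, E_j[Y_{j+1}]}, Y_J = S_J, and let (τ_l)_{l=0,...,J} be a consistent family of {0,...,J}-valued stopping times (τ_l ≥ l, and τ_l > l ⟹ τ_l = τ_{l+1}). Fix a window κ ∈ ℕ and define the stopping times τ̄_j = inf{ i ≥ j : S_i ≥ max_{l=i+1,...,min{i+κ,J}} E_i[S_{τ_l}] }. Then for every j = 0,...,J, E_j[S_{τ̄_j}] ≥ max_{l=j,...,min{j+κ,J}} E_j[S_{τ_l}] P-a.s. -/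
open MeasureTheory
open scoped ENNReal

noncomputable section

variable {Ω : Type*} {m0 : MeasurableSpace Ω}

/-- Policy improvement for optimal stopping: let `S` be adapted with
`S_j ∈ L^p` for all `p ≥ 1`, let `(τ_l)_{l=0,…,J}` be a consistent family of `{0,…,J}`-valued
stopping times (`τ_l ≥ l`, and `τ_l > l ⟹ τ_l = τ_{l+1}`), fix a window `κ ≥ 1` and define
`τ̄_j = inf{ i ≥ j : S_i ≥ max_{l=i+1,…,min(i+κ,J)} E_i[S_{τ_l}] }`. Then for every
`j = 0,…,J`, `E_j[S_{τ̄_j}] ≥ max_{l=j,…,min(j+κ,J)} E_j[S_{τ_l}]` `P`-a.s. -/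
theorem stopping_policy_improvement
    (μ : Measure Ω) [IsProbabilityMeasure μ] (ℱ : Filtration ℕ m0) (J : ℕ)
    (S : ℕ → Ω → ℝ)
    (hS_adapted : ∀ j ≤ J, StronglyMeasurable[ℱ j] (S j))
    (hS_int : ∀ j ≤ J, MemLinfMinus μ (S j))
    (τ : ℕ → Ω → ℕ)
    (hτ_stop : ∀ l ≤ J, IsStoppingTime ℱ (fun ω => (τ l ω : WithTop ℕ)))
    (hτ_ge : ∀ l ≤ J, ∀ ω, l ≤ τ l ω)
    (hτ_le : ∀ l ≤ J, ∀ ω, τ l ω ≤ J)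
    (hτ_cons : ∀ l < J, ∀ ω, l < τ l ω → τ l ω = τ (l + 1) ω)
    (κ : ℕ) (hκ : 1 ≤ κ)
    (τbar : ℕ → Ω → ℕ)
    (hτbar : ∀ j ω, τbar j ω =
      sInf {i | j ≤ i ∧ ∀ l, i + 1 ≤ l → l ≤ min (i + κ) J →
        (μ[fun ω' => S (τ l ω') ω'|ℱ i]) ω ≤ S i ω}) :
    ∀ j ≤ J, ∀ l, j ≤ l → l ≤ min (j + κ) J →
      ∀ᵐ ω ∂μ, (μ[fun ω' => S (τ l ω') ω'|ℱ j]) ω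
        ≤ (μ[fun ω' => S (τbar j ω') ω'|ℱ j]) ω := by
  classical
  -- basic measurability / integrability of `S`
  have hSm : ∀ j ≤ J, StronglyMeasurable (S j) := fun j hj => (hS_adapted j hj).mono (ℱ.le j)
  have hSint : ∀ j ≤ J, Integrable (S j) μ := fun j hj =>
    memLp_one_iff_integrable.mp (hS_int j hj 1 le_rfl ENNReal.one_ne_top)
  -- stopped processes are measurable and integrable
  have stopped : ∀ σ : Ω → ℕ, Measurable σ → (∀ ω, σ ω ≤ J) →
      StronglyMeasurable (fun ω => S (σ ω) ω) ∧ Integrable (fun ω => S (σ ω) ω) μ := by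
    intro σ hσm hσle
    have hrep : (fun ω => S (σ ω) ω) =
        fun ω => ∑ k ∈ Finset.range (J + 1), Set.indicator {ω' | σ ω' = k} (S k) ω := by
      funext ω
      rw [Finset.sum_eq_single (σ ω)]
      · rw [Set.indicator_of_mem (by simp : ω ∈ {ω' | σ ω' = σ ω})]
      · intro k _ hk
        exact Set.indicator_of_notMem (by simpa using (Ne.symm hk)) _
      · intro h
        exact absurd (Finset.mem_range.mpr (Nat.lt_succ_of_le (hσle ω))) h
    have hmeasset : ∀ k : ℕ, MeasurableSet {ω' | σ ω' = k} := by
      intro k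
      have : {ω' | σ ω' = k} = σ ⁻¹' {k} := by ext ω'; simp
      rw [this]; exact hσm (measurableSet_singleton k)
    constructor
    · rw [hrep]
      exact Finset.stronglyMeasurable_fun_sum _ fun k hk =>
        (hSm k (Nat.lt_succ_iff.mp (Finset.mem_range.mp hk))).indicator (hmeasset k)
    · rw [hrep]
      exact integrable_finset_sum _ fun k hk =>
        (hSint k (Nat.lt_succ_iff.mp (Finset.mem_range.mp hk))).indicator (hmeasset k)
  -- measurability of the stopping times τ l
  have hτmeas : ∀ l ≤ J, Measurable (τ l) := by
    intro l hl
    apply measurable_to_countable'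
    intro k
    have : τ l ⁻¹' {k} = {ω | τ l ω = k} := by ext ω; simp
    rw [this]
    exact ℱ.le k _ (by simpa using (hτ_stop l hl).measurableSet_eq k)
  have hfm : ∀ l ≤ J, StronglyMeasurable (fun ω => S (τ l ω) ω) :=
    fun l hl => (stopped (τ l) (hτmeas l hl) (hτ_le l hl)).1
  have hfint : ∀ l ≤ J, Integrable (fun ω => S (τ l ω) ω) μ :=
    fun l hl => (stopped (τ l) (hτmeas l hl) (hτ_le l hl)).2
  -- the "continuation region" condition at time i
  set C : ℕ → Ω → Prop := fun i ω => ∀ l, i + 1 ≤ l → l ≤ min (i + κ) J →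
      (μ[fun ω' => S (τ l ω') ω'|ℱ i]) ω ≤ S i ω with hCdef
  have hτbar' : ∀ j ω, τbar j ω = sInf {i | j ≤ i ∧ C i ω} := hτbar
  -- the condition holds vacuously at any time ≥ J
  have hCJ : ∀ i, J ≤ i → ∀ ω, C i ω := by
    intro i hi ω l hl1 hl2
    exfalso; omega
  -- range of τbar
  have hτbar_mem : ∀ j ≤ J, ∀ ω, j ≤ τbar j ω ∧ τbar j ω ≤ J := by
    intro j hj ω
    have hJmem : J ∈ {i | j ≤ i ∧ C i ω} := ⟨hj, hCJ J le_rfl ω⟩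
    constructor
    · rw [hτbar' j ω]
      exact (Nat.sInf_mem (⟨J, hJmem⟩ : Set.Nonempty _)).1
    · rw [hτbar' j ω]
      exact Nat.sInf_le hJmem
  have hτbarJ : ∀ ω, τbar J ω = J :=
    fun ω => le_antisymm (hτbar_mem J le_rfl ω).2 (hτbar_mem J le_rfl ω).1
  -- recursion for τbar
  have hrec1 : ∀ j, ∀ ω, C j ω → τbar j ω = j := by
    intro j ω hC
    rw [hτbar' j ω]
    have hmem : j ∈ {i | j ≤ i ∧ C i ω} := ⟨le_rfl, hC⟩
    exact le_antisymm (Nat.sInf_le hmem)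
      ((Nat.sInf_mem (⟨j, hmem⟩ : Set.Nonempty _)).1)
  have hrec2 : ∀ j, ∀ ω, ¬ C j ω → τbar j ω = τbar (j + 1) ω := by
    intro j ω hC
    rw [hτbar' j ω, hτbar' (j + 1) ω]
    congr 1
    ext i
    simp only [Set.mem_setOf_eq]
    constructor
    · rintro ⟨hji, h⟩
      refine ⟨?_, h⟩
      rcases Nat.lt_or_ge i (j + 1) with h' | h'
      · exfalso
        have : i = j := by omega
        subst this
        exact hC h
      · exact h'
    · rintro ⟨hji, h⟩
      exact ⟨by omega, h⟩
  -- the event A j = {C j} is ℱ j-measurable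
  have hBmeas : ∀ i ≤ J, MeasurableSet[ℱ i] {ω | C i ω} := by
    intro i hi
    have : {ω | C i ω} = ⋂ l, ⋂ (_ : i + 1 ≤ l), ⋂ (_ : l ≤ min (i + κ) J),
        {ω | (μ[fun ω' => S (τ l ω') ω'|ℱ i]) ω ≤ S i ω} := by
      ext ω
      simp only [hCdef, Set.mem_setOf_eq, Set.mem_iInter]
    rw [this]
    exact MeasurableSet.iInter fun l => MeasurableSet.iInter fun _ =>
      MeasurableSet.iInter fun _ =>
        measurableSet_le stronglyMeasurable_condExp.measurable (hS_adapted i hi).measurable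
  -- measurability of τbar j for j ≤ J, by downward induction
  have hτbarmeas : ∀ d : ℕ, ∀ j, J = j + d → Measurable (τbar j) := by
    intro d
    induction d with
    | zero =>
      intro j hjd
      have hj : j = J := by omega
      subst hj
      have : τbar j = fun _ => j := funext fun ω => hτbarJ ω
      rw [this]
      exact measurable_const
    | succ d ih =>
      intro j hjd
      have hjJ : j < J := by omega
      have heq : τbar j = Set.piecewise {ω | C j ω} (fun _ => j) (τbar (j + 1)) := by
        funext ω
        by_cases h : C j ω
        · rw [Set.piecewise_eq_of_mem _ _ _ (show ω ∈ {ω | C j ω} from h), hrec1 j ω h]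
        · rw [Set.piecewise_eq_of_notMem _ _ _ (show ω ∉ {ω | C j ω} from h), hrec2 j ω h]
      rw [heq]
      exact Measurable.piecewise (ℱ.le j _ (hBmeas j hjJ.le)) measurable_const
        (ih (j + 1) (by omega))
  have hgm : ∀ j ≤ J, StronglyMeasurable (fun ω => S (τbar j ω) ω) :=
    fun j hj => (stopped (τbar j) (hτbarmeas (J - j) j (by omega))
      (fun ω => (hτbar_mem j hj ω).2)).1
  have hgint : ∀ j ≤ J, Integrable (fun ω => S (τbar j ω) ω) μ :=
    fun j hj => (stopped (τbar j) (hτbarmeas (J - j) j (by omega))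
      (fun ω => (hτbar_mem j hj ω).2)).2
  -- main downward induction
  have key : ∀ d : ℕ, ∀ j, J = j + d →
      (∀ᵐ ω ∂μ, S j ω ≤ (μ[fun ω' => S (τbar j ω') ω'|ℱ j]) ω) ∧
      (∀ l, j ≤ l → l ≤ min (j + κ) J →
        ∀ᵐ ω ∂μ, (μ[fun ω' => S (τ l ω') ω'|ℱ j]) ω
          ≤ (μ[fun ω' => S (τbar j ω') ω'|ℱ j]) ω) := by
    intro d
    induction d with
    | zero =>
      intro j hjd
      have hj : j = J := by omega
      subst hj
      have hgeq : (fun ω' => S (τbar j ω') ω') = S j := funext fun ω => by rw [hτbarJ ω]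
      have hcond : μ[S j|ℱ j] = S j :=
        condExp_of_stronglyMeasurable (ℱ.le j) (hS_adapted j le_rfl) (hSint j le_rfl)
      constructor
      · rw [hgeq, hcond]
        exact Filter.Eventually.of_forall fun ω => le_rfl
      · intro l hl1 hl2
        have hlJ : l = j := by omega
        subst hlJ
        have hτeq : (fun ω' => S (τ l ω') ω') = S l :=
          funext fun ω => by rw [le_antisymm (hτ_le l le_rfl ω) (hτ_ge l le_rfl ω)]
        rw [hτeq, hgeq, hcond]
        exact Filter.Eventually.of_forall fun ω => le_rfl
    | succ d ih =>
      intro j hjd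
      have hjJ : j < J := by omega
      obtain ⟨ih_d, ih_c⟩ := ih (j + 1) (by omega)
      set A : Set Ω := {ω | C j ω} with hAdef
      have hA : MeasurableSet[ℱ j] A := hBmeas j hjJ.le
      -- splitting of the conditional expectation of the stopped process along A
      have hgrep : (fun ω' => S (τbar j ω') ω')
          = fun ω => A.indicator (S j) ω
            + Aᶜ.indicator (fun ω' => S (τbar (j + 1) ω') ω') ω := by
        funext ω
        by_cases h : ω ∈ A
        · rw [Set.indicator_of_mem h, Set.indicator_of_notMem (by simpa using h),
            hrec1 j ω h, add_zero]
        · rw [Set.indicator_of_notMem h, Set.indicator_of_mem (by simpa using h),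
            hrec2 j ω h, zero_add]
      have hint1 : Integrable (A.indicator (S j)) μ :=
        (hSint j hjJ.le).indicator (ℱ.le j _ hA)
      have hint2 : Integrable (Aᶜ.indicator (fun ω' => S (τbar (j + 1) ω') ω')) μ :=
        (hgint (j + 1) (by omega)).indicator (ℱ.le j _ hA.compl)
      have hcondS : μ[S j|ℱ j] = S j :=
        condExp_of_stronglyMeasurable (ℱ.le j) (hS_adapted j hjJ.le) (hSint j hjJ.le)
      have hsplit : μ[fun ω' => S (τbar j ω') ω'|ℱ j]
          =ᵐ[μ] fun ω => A.indicator (S j) ω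
            + Aᶜ.indicator (μ[fun ω' => S (τbar (j + 1) ω') ω'|ℱ j]) ω := by
        calc μ[fun ω' => S (τbar j ω') ω'|ℱ j]
            = μ[A.indicator (S j) + Aᶜ.indicator (fun ω' => S (τbar (j + 1) ω') ω')|ℱ j] := by
              rw [hgrep]; rfl
          _ =ᵐ[μ] μ[A.indicator (S j)|ℱ j]
              + μ[Aᶜ.indicator (fun ω' => S (τbar (j + 1) ω') ω')|ℱ j] :=
              condExp_add hint1 hint2 _
          _ =ᵐ[μ] fun ω => A.indicator (S j) ω
              + Aᶜ.indicator (μ[fun ω' => S (τbar (j + 1) ω') ω'|ℱ j]) ω := by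
              have h1 := condExp_indicator (hSint j hjJ.le) hA
              have h2 := condExp_indicator (hgint (j + 1) (by omega)) hA.compl
              filter_upwards [h1, h2] with ω h1' h2'
              simp only [Pi.add_apply, h1', h2', hcondS]
      -- monotonicity through the tower property on the window
      have hstep : ∀ l, j + 1 ≤ l → l ≤ min (j + κ) J →
          μ[fun ω' => S (τ l ω') ω'|ℱ j]
            ≤ᵐ[μ] μ[fun ω' => S (τbar (j + 1) ω') ω'|ℱ j] := by
        intro l h1 h2
        have h3 : l ≤ min (j + 1 + κ) J := by omega
        have hIH : (μ[fun ω' => S (τ l ω') ω'|ℱ (j + 1)])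
            ≤ᵐ[μ] (μ[fun ω' => S (τbar (j + 1) ω') ω'|ℱ (j + 1)]) := ih_c l h1 h3
        have hmono := condExp_mono (m := ℱ j) (integrable_condExp) (integrable_condExp) hIH
        have ht1 := condExp_condExp_of_le (ℱ.mono (Nat.le_succ j)) (ℱ.le (j + 1))
          (f := fun ω' => S (τ l ω') ω') (μ := μ)
        have ht2 := condExp_condExp_of_le (ℱ.mono (Nat.le_succ j)) (ℱ.le (j + 1))
          (f := fun ω' => S (τbar (j + 1) ω') ω') (μ := μ)
        calc μ[fun ω' => S (τ l ω') ω'|ℱ j]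
            =ᵐ[μ] μ[μ[fun ω' => S (τ l ω') ω'|ℱ (j + 1)]|ℱ j] := ht1.symm
          _ ≤ᵐ[μ] μ[μ[fun ω' => S (τbar (j + 1) ω') ω'|ℱ (j + 1)]|ℱ j] := hmono
          _ =ᵐ[μ] μ[fun ω' => S (τbar (j + 1) ω') ω'|ℱ j] := ht2
      have hwin : ∀ᵐ ω ∂μ, ∀ l, j + 1 ≤ l → l ≤ min (j + κ) J →
          (μ[fun ω' => S (τ l ω') ω'|ℱ j]) ω
            ≤ (μ[fun ω' => S (τbar (j + 1) ω') ω'|ℱ j]) ω := by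
        rw [ae_all_iff]
        intro l
        by_cases h1 : j + 1 ≤ l
        · by_cases h2 : l ≤ min (j + κ) J
          · filter_upwards [hstep l h1 h2] with ω h _ _
            exact h
          · filter_upwards with ω _ h
            exact absurd h h2
        · filter_upwards with ω h
          exact absurd h h1
      -- first claim: E_j[S_{τbar j}] ≥ S j
      have hd0 : ∀ᵐ ω ∂μ, S j ω ≤ (μ[fun ω' => S (τbar j ω') ω'|ℱ j]) ω := by
        filter_upwards [hsplit, hwin] with ω hω hωw
        by_cases hA' : ω ∈ A
        · rw [hω, Set.indicator_of_mem hA', Set.indicator_of_notMem (by simpa using hA'),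
            add_zero]
        · have hA'' : ¬ C j ω := hA'
          simp only [hCdef, not_forall, not_le] at hA''
          obtain ⟨l, h1, h2, h3⟩ := hA''
          have := hωw l h1 h2
          rw [hω, Set.indicator_of_notMem hA', Set.indicator_of_mem (by simpa using hA'),
            zero_add]
          linarith
      -- second claim for l in the strict window
      have hcgt : ∀ l, j + 1 ≤ l → l ≤ min (j + κ) J →
          ∀ᵐ ω ∂μ, (μ[fun ω' => S (τ l ω') ω'|ℱ j]) ω
            ≤ (μ[fun ω' => S (τbar j ω') ω'|ℱ j]) ω := by
        intro l h1 h2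
        filter_upwards [hsplit, hwin] with ω hω hωw
        by_cases hA' : ω ∈ A
        · rw [hω, Set.indicator_of_mem hA', Set.indicator_of_notMem (by simpa using hA'),
            add_zero]
          exact hA' l h1 h2
        · rw [hω, Set.indicator_of_notMem hA', Set.indicator_of_mem (by simpa using hA'),
            zero_add]
          exact hωw l h1 h2
      refine ⟨hd0, ?_⟩
      intro l hl1 hl2
      rcases lt_or_eq_of_le hl1 with hl | hl
      · exact hcgt l hl hl2
      · -- j = j : decompose S_{τ j} along the event {τ j = j}
        subst hl
        set E : Set Ω := {ω | τ j ω = j} with hEdef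
        have hE : MeasurableSet[ℱ j] E := by
          have h := (hτ_stop j hjJ.le).measurableSet_eq j
          convert h using 1
          ext ω
          simp [hEdef]
        have hfrep : (fun ω' => S (τ j ω') ω')
            = fun ω => E.indicator (S j) ω
              + Eᶜ.indicator (fun ω' => S (τ (j + 1) ω') ω') ω := by
          funext ω
          by_cases h : ω ∈ E
          · have hτeq : τ j ω = j := h
            rw [Set.indicator_of_mem h, Set.indicator_of_notMem (by simpa using h),
              hτeq, add_zero]
          · have hτne : τ j ω ≠ j := h
            have hτgt : j < τ j ω := lt_of_le_of_ne (hτ_ge j hjJ.le ω) (Ne.symm hτne)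
            rw [Set.indicator_of_notMem h, Set.indicator_of_mem (by simpa using h),
              hτ_cons j hjJ ω hτgt, zero_add]
        have hint1' : Integrable (E.indicator (S j)) μ :=
          (hSint j hjJ.le).indicator (ℱ.le j _ hE)
        have hint2' : Integrable (Eᶜ.indicator (fun ω' => S (τ (j + 1) ω') ω')) μ :=
          (hfint (j + 1) (by omega)).indicator (ℱ.le j _ hE.compl)
        have hfsplit : μ[fun ω' => S (τ j ω') ω'|ℱ j]
            =ᵐ[μ] fun ω => E.indicator (S j) ω
              + Eᶜ.indicator (μ[fun ω' => S (τ (j + 1) ω') ω'|ℱ j]) ω := by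
          calc μ[fun ω' => S (τ j ω') ω'|ℱ j]
              = μ[E.indicator (S j) + Eᶜ.indicator (fun ω' => S (τ (j + 1) ω') ω')|ℱ j] := by
                rw [hfrep]; rfl
            _ =ᵐ[μ] μ[E.indicator (S j)|ℱ j]
                + μ[Eᶜ.indicator (fun ω' => S (τ (j + 1) ω') ω')|ℱ j] :=
                condExp_add hint1' hint2' _
            _ =ᵐ[μ] fun ω => E.indicator (S j) ω
                + Eᶜ.indicator (μ[fun ω' => S (τ (j + 1) ω') ω'|ℱ j]) ω := by
                have h1 := condExp_indicator (hSint j hjJ.le) hE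
                have h2 := condExp_indicator (hfint (j + 1) (by omega)) hE.compl
                filter_upwards [h1, h2] with ω h1' h2'
                simp only [Pi.add_apply, h1', h2', hcondS]
        have hnext : ∀ᵐ ω ∂μ, (μ[fun ω' => S (τ (j + 1) ω') ω'|ℱ j]) ω
            ≤ (μ[fun ω' => S (τbar j ω') ω'|ℱ j]) ω :=
          hcgt (j + 1) le_rfl (by omega)
        filter_upwards [hfsplit, hd0, hnext] with ω h1 h2 h3
        rw [h1]
        by_cases hE' : ω ∈ E
        · rw [Set.indicator_of_mem hE', Set.indicator_of_notMem (by simpa using hE'),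
            add_zero]
          exact h2
        · rw [Set.indicator_of_notMem hE', Set.indicator_of_mem (by simpa using hE'),
            zero_add]
          exact h3
  intro j hj l hl1 hl2
  exact (key (J - j) j (by omega)).2 l hl1 hl2

end
end

section
/- Integrability of the upper pathwise recursion: for any martingale M ∈ M_D, the process θ^{up}(M) defined backward by θ^{up}_J = ξ and θ^{up}_j = F_j(β_{j+1} θ^{up}_{j+1} − (M_{j+1} − M_j)) satisfies θ^{up}_j ∈ L^{∞-}(ℝ) for every j = 0,...,J. -/
open MeasureTheory
open scoped ENNReal

noncomputable section

variable {Ω : Type*} {m0 : MeasurableSpace Ω}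

section Helpers

variable {Ω : Type*} {m0 : MeasurableSpace Ω} {μ : Measure Ω}
  {E : Type*} [NormedAddCommGroup E]

lemma MemLinfMinus.aesm_s15 {f : Ω → E} (h : MemLinfMinus μ f) : AEStronglyMeasurable f μ :=
  (h 1 le_rfl (by simp)).1

lemma MemLinfMinus.congr' {f g : Ω → E} (h : MemLinfMinus μ f) (hfg : f =ᵐ[μ] g) :
    MemLinfMinus μ g := fun p hp hp' => (h p hp hp').ae_eq hfg

lemma memLinfMinus_const [IsFiniteMeasure μ] (c : E) :
    MemLinfMinus μ (fun _ => c) := fun p _ _ => memLp_const c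

lemma MemLinfMinus.add' {f g : Ω → E} (hf : MemLinfMinus μ f) (hg : MemLinfMinus μ g) :
    MemLinfMinus μ (fun ω => f ω + g ω) := fun p hp hp' => (hf p hp hp').add (hg p hp hp')

lemma MemLinfMinus.sub' {f g : Ω → E} (hf : MemLinfMinus μ f) (hg : MemLinfMinus μ g) :
    MemLinfMinus μ (fun ω => f ω - g ω) := fun p hp hp' => (hf p hp hp').sub (hg p hp hp')

lemma MemLinfMinus.norm' {f : Ω → E} (hf : MemLinfMinus μ f) :
    MemLinfMinus μ (fun ω => ‖f ω‖) := fun p hp hp' => (hf p hp hp').norm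

lemma MemLinfMinus.smul' [NormedSpace ℝ E] {f : Ω → ℝ} {g : Ω → E}
    (hf : MemLinfMinus μ f) (hg : MemLinfMinus μ g) :
    MemLinfMinus μ (fun ω => f ω • g ω) := by
  intro p hp hp'
  have h2p : (1 : ℝ≥0∞) ≤ 2 * p := le_trans hp (le_mul_of_one_le_left zero_le one_le_two)
  have h2p' : 2 * p ≠ ⊤ := ENNReal.mul_ne_top (by norm_num) hp'
  have harr : 1 / p = 1 / (2 * p) + 1 / (2 * p) := by
    rw [ENNReal.div_add_div_same, one_add_one_eq_two]
    rw [show (2 : ℝ≥0∞) / (2 * p) = 2 * 1 / (2 * p) by rw [mul_one]]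
    rw [ENNReal.mul_div_mul_left 1 p (by norm_num) (by norm_num)]
  haveI : ENNReal.HolderTriple (2 * p) (2 * p) p := ⟨by simpa only [one_div] using harr.symm⟩
  exact (hg (2 * p) h2p h2p').smul (hf (2 * p) h2p h2p')

lemma MemLinfMinus.mul' {f g : Ω → ℝ} (hf : MemLinfMinus μ f) (hg : MemLinfMinus μ g) :
    MemLinfMinus μ (fun ω => f ω * g ω) := hf.smul' hg

lemma MemLinfMinus.pow' {f : Ω → ℝ} [IsFiniteMeasure μ] (hf : MemLinfMinus μ f) :
    ∀ n : ℕ, MemLinfMinus μ (fun ω => f ω ^ n)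
  | 0 => by simpa using memLinfMinus_const (μ := μ) (1 : ℝ)
  | (n + 1) => by
      have h := hf.mul' (hf.pow' n)
      have he : (fun ω => f ω * f ω ^ n) = fun ω => f ω ^ (n + 1) := by
        funext ω; ring
      rwa [he] at h

lemma MemLinfMinus.norm_rpow' {f : Ω → E} [IsFiniteMeasure μ] (hf : MemLinfMinus μ f)
    {q : ℝ} (hq : 0 ≤ q) : MemLinfMinus μ (fun ω => ‖f ω‖ ^ q) := by
  have hb : MemLinfMinus μ (fun ω => 1 + ‖f ω‖ ^ (⌈q⌉₊ : ℕ)) :=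
    (memLinfMinus_const 1).add' (hf.norm'.pow' _)
  intro p hp hp'
  refine (hb p hp hp').of_le
    ((Real.continuous_rpow_const hq).comp_aestronglyMeasurable hf.aesm_s15.norm) ?_
  filter_upwards with ω
  rw [Real.norm_eq_abs, abs_of_nonneg (Real.rpow_nonneg (norm_nonneg _) _), Real.norm_eq_abs]
  have h1 : ‖f ω‖ ^ q ≤ 1 + ‖f ω‖ ^ (⌈q⌉₊ : ℕ) := by
    rcases le_total (‖f ω‖) 1 with h | h
    · have h2 := Real.rpow_le_one (norm_nonneg _) h hq
      nlinarith [pow_nonneg (norm_nonneg (f ω)) ⌈q⌉₊]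
    · have h2 : ‖f ω‖ ^ q ≤ ‖f ω‖ ^ ((⌈q⌉₊ : ℕ) : ℝ) :=
        Real.rpow_le_rpow_of_exponent_le h (Nat.le_ceil q)
      rw [Real.rpow_natCast] at h2
      linarith
  exact h1.trans (le_abs_self _)

end Helpers

/-- integrability of the upper pathwise recursion: for any martingale `M ∈ M_D`,
the process `θ^{up}(M)` defined backward by `θ_J = ξ`,
`θ_j = F_j(β_{j+1} θ_{j+1} − ΔM_{j+1})` is in `L^{∞-}` at every time `j = 0,…,J`. -/
theorem thetaUp_memLinfMinus
    (μ : Measure Ω) [IsProbabilityMeasure μ] (ℱ : Filtration ℕ m0)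
    (J D : ℕ) (F : ℕ → Ω → (Fin D → ℝ) → ℝ) (β : ℕ → Ω → Fin D → ℝ) (ξ : Ω → ℝ)
    (hset : Setting μ ℱ J D F β ξ)
    (M : ℕ → Ω → Fin D → ℝ) (hM : IsMartD μ ℱ M)
    (θ : ℕ → Ω → ℝ) (hθ : IsThetaUp μ J D F β ξ M θ) :
    ∀ j ≤ J, MemLinfMinus μ (θ j) := by
  obtain ⟨q, hq0, α, hαmeas, hαnn, hαint, hgrowth⟩ := hset.F_growth
  obtain ⟨hθJ, hθrec⟩ := hθ
  have key : ∀ k j, j + k = J → MemLinfMinus μ (θ j) := by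
    intro k
    induction k with
    | zero =>
      intro j hj
      have hJ : j = J := by omega
      rw [hJ]
      exact hset.ξ_int.congr' (Filter.EventuallyEq.symm hθJ)
    | succ k ih =>
      intro j hj
      have hjJ : j < J := by omega
      have hnext : MemLinfMinus μ (θ (j + 1)) := ih (j + 1) (by omega)
      set z : Ω → Fin D → ℝ :=
        fun ω d => β (j + 1) ω d * θ (j + 1) ω - (M (j + 1) ω d - M j ω d) with hzdef
      have hβ : MemLinfMinus μ (β (j + 1)) := hset.β_int (j + 1) (by omega)
      have hM1 : MemLinfMinus μ (M (j + 1)) := hM.2 (j + 1)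
      have hM0 : MemLinfMinus μ (M j) := hM.2 j
      have hz : MemLinfMinus μ z := by
        have h1 : MemLinfMinus μ (fun ω => θ (j + 1) ω • β (j + 1) ω) := hnext.smul' hβ
        have h2 : MemLinfMinus μ (fun ω => M (j + 1) ω - M j ω) := hM1.sub' hM0
        have h3 := h1.sub' h2
        refine h3.congr' ?_
        filter_upwards with ω
        funext d
        simp [hzdef, mul_comm]
      -- a.e.-measurable version of z
      set θ' : Ω → ℝ := hnext.aesm_s15.mk (θ (j + 1)) with hθ'def
      have hθ'meas : StronglyMeasurable θ' := hnext.aesm_s15.stronglyMeasurable_mk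
      have hθ'ae : θ (j + 1) =ᵐ[μ] θ' := hnext.aesm_s15.ae_eq_mk
      set z' : Ω → Fin D → ℝ :=
        fun ω d => β (j + 1) ω d * θ' ω - (M (j + 1) ω d - M j ω d) with hz'def
      have hβm : Measurable (β (j + 1)) :=
        ((hset.β_adapted (j + 1) (by omega)).mono (ℱ.le _)).measurable
      have hM1m : Measurable (M (j + 1)) :=
        ((hM.1.stronglyAdapted (j + 1)).mono (ℱ.le _)).measurable
      have hM0m : Measurable (M j) := ((hM.1.stronglyAdapted j).mono (ℱ.le _)).measurable
      have hz'meas : Measurable z' := by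
        refine measurable_pi_lambda _ (fun d => ?_)
        exact (((measurable_pi_apply d).comp hβm).mul hθ'meas.measurable).sub
          (((measurable_pi_apply d).comp hM1m).sub ((measurable_pi_apply d).comp hM0m))
      have hzz' : z =ᵐ[μ] z' := by
        filter_upwards [hθ'ae] with ω hω
        funext d
        simp [hzdef, hz'def, hω]
      have hFz'meas : Measurable (fun ω => F j ω (z' ω)) :=
        (hset.F_meas j hjJ).comp (measurable_id.prodMk hz'meas)
      have hθjz : θ j =ᵐ[μ] fun ω => F j ω (z ω) := hθrec j hjJ
      have hAESM : AEStronglyMeasurable (θ j) μ := by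
        refine hFz'meas.aestronglyMeasurable.congr ?_
        filter_upwards [hθjz, hzz'] with ω h1 h2
        rw [h1, h2]
      -- the growth bound holds a.e. simultaneously for all arguments
      have hall : ∀ᵐ ω ∂μ, ∀ n : ℕ,
          |F j ω (TopologicalSpace.denseSeq (Fin D → ℝ) n)| ≤
            α j ω * (1 + ‖TopologicalSpace.denseSeq (Fin D → ℝ) n‖ ^ q) :=
        ae_all_iff.2 fun n => hgrowth j hjJ _
      have hglobal : ∀ᵐ ω ∂μ, ∀ v : Fin D → ℝ, |F j ω v| ≤ α j ω * (1 + ‖v‖ ^ q) := by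
        filter_upwards [hall] with ω hω v
        have hcont : Continuous (F j ω) := by
          exact continuousOn_univ.1
            ((hset.F_convex j hjJ ω).continuousOn isOpen_univ)
        have hv : v ∈ closure (Set.range (TopologicalSpace.denseSeq (Fin D → ℝ))) :=
          TopologicalSpace.denseRange_denseSeq _ v
        obtain ⟨x, hxmem, hxlim⟩ := mem_closure_iff_seq_limit.1 hv
        have h1 : Filter.Tendsto (fun n => |F j ω (x n)|) Filter.atTop (nhds |F j ω v|) :=
          ((hcont.tendsto v).comp hxlim).abs
        have h2 : Filter.Tendsto (fun n => α j ω * (1 + ‖x n‖ ^ q)) Filter.atTop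
            (nhds (α j ω * (1 + ‖v‖ ^ q))) :=
          tendsto_const_nhds.mul (tendsto_const_nhds.add
            (((continuous_norm.tendsto v).comp hxlim).rpow_const (Or.inr hq0)))
        refine le_of_tendsto_of_tendsto' h1 h2 (fun n => ?_)
        obtain ⟨m, hm⟩ := hxmem n
        rw [← hm]
        exact hω m
      have hbound : MemLinfMinus μ (fun ω => α j ω * (1 + ‖z ω‖ ^ q)) :=
        (hαint j hjJ).mul' ((memLinfMinus_const 1).add' (hz.norm_rpow' hq0))
      intro p hp hp'
      refine (hbound p hp hp').of_le hAESM ?_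
      filter_upwards [hθjz, hglobal] with ω h1 h2
      rw [h1, Real.norm_eq_abs, Real.norm_eq_abs]
      exact (h2 (z ω)).trans (le_abs_self _)
  intro j hj
  exact key (J - j) j (by omega)


end
end
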